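/- Let f ∈ ℝ[x,y,z] be homogeneous of degree 4 defining a smooth complex plane quartic Q = V(f) (the gradient of f is nonzero at every nonzero complex zero of f). Let L = V(ℓ) be a real bitangent of Q with tangency points z₁, z₂, and let L∞ = V(ℓ∞) be a real line not containing z₁ or z₂. Let z̃₁, z̃₂ ∈ ℂ³ be the unique homogeneous representatives with ℓ∞(z̃ᵢ) = 1. Then: (1) for every v ∈ ℝ³ with ℓ(v) ≠ 0, the directional derivative (D_v f)(z̃ᵢ) is nonzero for i = 1, 2; (2) the product (D_v f)(z̃₁)·(D_v f)(z̃₂) is a nonzero real number; and (3) its sign is independent of the choice of v and of the labeling of z₁, z₂ — for any two choices v, v′ with ℓ(v), ℓ(v′) ≠ 0, the two products differ by the positive factor (ℓ(v′)/ℓ(v))². -/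

import Mathlib

open MvPolynomial

noncomputable section

/-- Complexification of a real ternary polynomial. -/
def cmap (f : MvPolynomial (Fin 3) ℝ) : MvPolynomial (Fin 3) ℂ :=
  MvPolynomial.map (algebraMap ℝ ℂ) f

/-- Evaluation of the complexification of `f` at a complex point. -/
def cev (f : MvPolynomial (Fin 3) ℝ) (p : Fin 3 → ℂ) : ℂ :=
  eval p (cmap f)

/-- The linear form with coefficient vector `ℓ`, evaluated at `p`. -/
def lin {R : Type*} [CommSemiring R] (ℓ p : Fin 3 → R) : R := ∑ i, ℓ i * p i

/-- The complexification of a real vector. -/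
def cvec (v : Fin 3 → ℝ) : Fin 3 → ℂ := fun i => (v i : ℂ)

/-- Smoothness of the complex plane curve V(f): the gradient is nonzero at every
nonzero complex zero of `f`. -/
def SmoothQuartic (f : MvPolynomial (Fin 3) ℝ) : Prop :=
  ∀ p : Fin 3 → ℂ, p ≠ 0 → cev f p = 0 → ∃ i, eval p (pderiv i (cmap f)) ≠ 0

/-- The line `V(ℓ)` is a bitangent of `V(f)` with tangency points `z₁, z₂`:
the restriction of `f` to the line is a nonzero scalar multiple of the square of a
nonzero quadratic form on the line, whose zeros (with multiplicity) are `z₁, z₂`.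
Over ℂ the quadratic form is written as the product of two linear forms `m₁, m₂`,
each nonzero on the line and vanishing at the corresponding tangency point. -/
def IsBitangentAt (f : MvPolynomial (Fin 3) ℝ) (ℓ z₁ z₂ : Fin 3 → ℂ) : Prop :=
  ℓ ≠ 0 ∧ z₁ ≠ 0 ∧ z₂ ≠ 0 ∧ lin ℓ z₁ = 0 ∧ lin ℓ z₂ = 0 ∧
  ∃ (m₁ m₂ : Fin 3 → ℂ) (c : ℂ), c ≠ 0 ∧
    lin m₁ z₁ = 0 ∧ lin m₂ z₂ = 0 ∧
    (∃ p, lin ℓ p = 0 ∧ lin m₁ p ≠ 0) ∧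
    (∃ p, lin ℓ p = 0 ∧ lin m₂ p ≠ 0) ∧
    (∀ p, lin ℓ p = 0 → cev f p = c * (lin m₁ p * lin m₂ p) ^ 2)

/-- The line `V(ℓ)` is a bitangent of the quartic `V(f)`. -/
def IsBitangent (f : MvPolynomial (Fin 3) ℝ) (ℓ : Fin 3 → ℂ) : Prop :=
  ∃ z₁ z₂, IsBitangentAt f ℓ z₁ z₂

/-- The set of real bitangent lines of `V(f)`, as points of the real projective
plane of lines. -/
def realBitangents (f : MvPolynomial (Fin 3) ℝ) :
    Set (Projectivization ℝ (Fin 3 → ℝ)) :=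
  {L | IsBitangent f (cvec L.rep)}

/-- Directional derivative of (the complexification of) `f` along the real vector `v`. -/
def Dv (f : MvPolynomial (Fin 3) ℝ) (v : Fin 3 → ℝ) (z : Fin 3 → ℂ) : ℂ :=
  ∑ i, (v i : ℂ) * eval z (pderiv i (cmap f))

/-- `Qtype_{L∞}(L) = ε ∈ {+1, -1}` for the real bitangent `L = V(ℓ)` of `V(f)`,
relative to the real line at infinity `V(ℓinf)`: for tangency points normalized so
that `ℓ∞(z̃ᵢ) = 1` and any real `v` with `ℓ(v) ≠ 0`, the product
`(D_v f)(z̃₁)·(D_v f)(z̃₂)` is a nonzero real number of sign `ε`. -/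
def HasQtype (f : MvPolynomial (Fin 3) ℝ) (ℓinf : Fin 3 → ℝ) (ℓ : Fin 3 → ℂ)
    (ε : ℤ) : Prop :=
  ∃ (z₁ z₂ : Fin 3 → ℂ) (v : Fin 3 → ℝ) (r : ℝ),
    IsBitangentAt f ℓ z₁ z₂ ∧
    lin (cvec ℓinf) z₁ = 1 ∧ lin (cvec ℓinf) z₂ = 1 ∧
    lin ℓ (cvec v) ≠ 0 ∧
    Dv f v z₁ * Dv f v z₂ = (r : ℂ) ∧
    ((0 < r ∧ ε = 1) ∨ (r < 0 ∧ ε = -1))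

/-- A point of ℙ²(ℂ) (given by a nonzero vector) is real. -/
def IsRealPoint (z : Fin 3 → ℂ) : Prop :=
  ∃ (w : Fin 3 → ℝ) (t : ℂ), w ≠ 0 ∧ t ≠ 0 ∧ z = t • cvec w


namespace St14Aux

/-- Entrywise complex conjugation of a vector. -/
def conjv (z : Fin 3 → ℂ) : Fin 3 → ℂ := fun i => (starRingEnd ℂ) (z i)

lemma conjv_conjv (z : Fin 3 → ℂ) : conjv (conjv z) = z :=
  funext fun i => Complex.conj_conj _

lemma conjv_ne_zero {z : Fin 3 → ℂ} (hz : z ≠ 0) : conjv z ≠ 0 := by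
  intro h
  apply hz
  rw [← conjv_conjv z, h]
  funext i
  simp [conjv]

lemma cvec_ne_zero {a : Fin 3 → ℝ} (ha : a ≠ 0) : cvec a ≠ 0 := by
  intro h
  apply ha
  funext i
  have := congrFun h i
  simpa [cvec] using this

lemma lin_comb (m z w : Fin 3 → ℂ) (t : ℂ) :
    lin m (fun i => z i + t * w i) = lin m z + t * lin m w := by
  simp [lin, Fin.sum_univ_three]; ring

lemma lin_smul (m z : Fin 3 → ℂ) (t : ℂ) : lin m (t • z) = t * lin m z := by
  simp [lin, Fin.sum_univ_three]; ring

lemma lin_cvec (a b : Fin 3 → ℝ) :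
    lin (cvec a) (cvec b) = ((lin a b : ℝ) : ℂ) := by
  simp [lin, cvec, Fin.sum_univ_three]

lemma lin_cvec_conjv (a : Fin 3 → ℝ) (z : Fin 3 → ℂ) :
    lin (cvec a) (conjv z) = (starRingEnd ℂ) (lin (cvec a) z) := by
  simp [lin, cvec, conjv, Fin.sum_univ_three, map_add, map_mul, Complex.conj_ofReal]

lemma cev_conj (f : MvPolynomial (Fin 3) ℝ) (p : Fin 3 → ℂ) :
    cev f (conjv p) = (starRingEnd ℂ) (cev f p) := by
  unfold cev cmap
  rw [eval_map, eval_map, eval₂_comp_left (starRingEnd ℂ) (algebraMap ℝ ℂ) p f]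
  congr 1
  ext r
  simp [Complex.conj_ofReal]

lemma pd_conj (f : MvPolynomial (Fin 3) ℝ) (i : Fin 3) (z : Fin 3 → ℂ) :
    eval (conjv z) (pderiv i (cmap f)) = (starRingEnd ℂ) (eval z (pderiv i (cmap f))) := by
  have h := cev_conj (pderiv i f) z
  unfold cev at h
  unfold cmap at h ⊢
  rw [pderiv_map]
  exact h

lemma Dv_conj (f : MvPolynomial (Fin 3) ℝ) (v : Fin 3 → ℝ) (z : Fin 3 → ℂ) :
    Dv f v (conjv z) = (starRingEnd ℂ) (Dv f v z) := by
  unfold Dv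
  rw [map_sum]
  refine Finset.sum_congr rfl fun i _ => ?_
  rw [map_mul, Complex.conj_ofReal, pd_conj]

/-- Derivative of a multivariate polynomial along a line. -/
lemma hasDerivAt_eval_line (F : MvPolynomial (Fin 3) ℂ) (z w : Fin 3 → ℂ) :
    HasDerivAt (fun t : ℂ => eval (fun i => z i + t * w i) F)
      (∑ i, w i * eval z (pderiv i F)) 0 := by
  induction F using MvPolynomial.induction_on with
  | C a => simpa [pderiv_C] using hasDerivAt_const (0 : ℂ) a
  | add p q hp hq =>
      simpa [map_add, eval_add, mul_add, Finset.sum_add_distrib] using hp.fun_add hq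
  | mul_X p j hp =>
      have hX : HasDerivAt (fun t : ℂ => z j + t * w j) (w j) 0 := by
        simpa using ((hasDerivAt_id (0 : ℂ)).mul_const (w j)).const_add (z j)
      have h2 := hp.fun_mul hX
      simp only [zero_mul, add_zero] at h2
      have hsum : ∑ i, w i * eval z (pderiv i (p * X j))
          = (∑ i, w i * eval z (pderiv i p)) * z j + eval z p * w j := by
        fin_cases j <;>
          simp [Fin.sum_univ_three, pderiv_mul, Pi.single_apply] <;> ring
      rw [hsum]
      simpa only [eval_mul, eval_X] using h2

/-- The gradient of `f` at a tangency point on the bitangent is proportional to `ℓ`. -/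
lemma grad_eq (f : MvPolynomial (Fin 3) ℝ) (hsm : SmoothQuartic f)
    (ℓ : Fin 3 → ℝ) (hℓ : ℓ ≠ 0) (m₁ m₂ : Fin 3 → ℂ) (c : ℂ) (hc : c ≠ 0)
    (hline : ∀ p, lin (cvec ℓ) p = 0 → cev f p = c * (lin m₁ p * lin m₂ p) ^ 2)
    (z : Fin 3 → ℂ) (hz : z ≠ 0) (hlz : lin (cvec ℓ) z = 0) (hm1 : lin m₁ z = 0) :
    ∃ lam : ℂ, lam ≠ 0 ∧ ∀ i, eval z (pderiv i (cmap f)) = lam * (ℓ i : ℂ) := by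
  classical
  set a : Fin 3 → ℂ := fun i => eval z (pderiv i (cmap f)) with ha
  have hz0 : cev f z = 0 := by
    rw [hline z hlz, hm1]; ring
  -- key orthogonality
  have key : ∀ w : Fin 3 → ℂ, lin (cvec ℓ) w = 0 → ∑ i, w i * a i = 0 := by
    intro w hw
    have hD := hasDerivAt_eval_line (cmap f) z w
    have heq : (fun t : ℂ => eval (fun i => z i + t * w i) (cmap f)) =
        fun t : ℂ => c * ((t * lin m₁ w) * (lin m₂ z + t * lin m₂ w)) ^ 2 := by
      funext t
      have hp : lin (cvec ℓ) (fun i => z i + t * w i) = 0 := by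
        rw [lin_comb, hlz, hw]; ring
      have := hline _ hp
      unfold cev at this
      rw [this, lin_comb, lin_comb, hm1, zero_add]
    rw [heq] at hD
    have h1 : HasDerivAt (fun t : ℂ => t * lin m₁ w) (lin m₁ w) 0 := by
      simpa using (hasDerivAt_id (0 : ℂ)).mul_const (lin m₁ w)
    have h2 : HasDerivAt (fun t : ℂ => lin m₂ z + t * lin m₂ w) (lin m₂ w) 0 := by
      simpa using ((hasDerivAt_id (0 : ℂ)).mul_const (lin m₂ w)).const_add (lin m₂ z)
    have hu := h1.mul h2
    have hD2 := (hu.pow 2).const_mul c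
    simp only [zero_mul, add_zero, zero_add, mul_zero, pow_one] at hD2
    have : (∑ i, w i * a i) = 0 := by
      have := hD.unique hD2
      simpa using this
    exact this
  -- pairwise relations
  have key2 : ∀ i j : Fin 3, (ℓ j : ℂ) * a i = (ℓ i : ℂ) * a j := by
    intro i j
    set w : Fin 3 → ℂ :=
      fun k => (if k = i then (ℓ j : ℂ) else 0) - (if k = j then (ℓ i : ℂ) else 0) with hwdef
    have hw : lin (cvec ℓ) w = 0 := by
      fin_cases i <;> fin_cases j <;>
        simp [hwdef, lin, cvec, Fin.sum_univ_three] <;> ring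
    have h := key w hw
    have hsum : ∑ k, w k * a k = (ℓ j : ℂ) * a i - (ℓ i : ℂ) * a j := by
      fin_cases i <;> fin_cases j <;>
        simp [hwdef, Fin.sum_univ_three] <;> ring
    rw [hsum] at h
    linear_combination h
  obtain ⟨j0, hj0⟩ : ∃ j, ℓ j ≠ 0 := Function.ne_iff.mp hℓ
  have hℓj0 : (ℓ j0 : ℂ) ≠ 0 := Complex.ofReal_ne_zero.mpr hj0
  have hall : ∀ i, a i = a j0 / (ℓ j0 : ℂ) * (ℓ i : ℂ) := by
    intro i
    have hrel := key2 i j0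
    field_simp
    linear_combination hrel
  refine ⟨a j0 / (ℓ j0 : ℂ), ?_, hall⟩
  obtain ⟨i, hi⟩ := hsm z hz hz0
  intro h0
  exact hi (by rw [show eval z (pderiv i (cmap f)) = a i from rfl, hall i, h0, zero_mul])

/-- Nonzero vectors in the common kernel of two independent linear forms are
proportional. -/
def cr (u v : Fin 3 → ℂ) : Fin 3 → ℂ :=
  ![u 1 * v 2 - u 2 * v 1, u 2 * v 0 - u 0 * v 2, u 0 * v 1 - u 1 * v 0]

lemma cr_eq_zero_imp {u v : Fin 3 → ℂ} (hu : u ≠ 0) (h : cr u v = 0) :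
    ∃ t : ℂ, v = t • u := by
  have h0 := congrFun h 0
  have h1 := congrFun h 1
  have h2 := congrFun h 2
  simp only [cr, Matrix.cons_val_zero, Matrix.cons_val_one, Matrix.head_cons,
    Matrix.cons_val_two, Matrix.tail_cons, Pi.zero_apply, sub_eq_zero] at h0 h1 h2
  obtain ⟨k, hk⟩ := Function.ne_iff.mp hu
  have tri : ∀ i : Fin 3, i = 0 ∨ i = 1 ∨ i = 2 := by decide
  have key : ∀ i j : Fin 3, u i * v j = u j * v i := by
    intro i j
    rcases tri i with rfl | rfl | rfl <;> rcases tri j with rfl | rfl | rfl <;>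
      first
        | ring1
        | linear_combination h0
        | linear_combination -h0
        | linear_combination h1
        | linear_combination -h1
        | linear_combination h2
        | linear_combination -h2
  have hk' : u k ≠ 0 := by simpa using hk
  refine ⟨v k / u k, funext fun i => ?_⟩
  have hki := key k i
  simp only [Pi.smul_apply, smul_eq_mul]
  field_simp
  first
    | linear_combination hki
    | linear_combination -hki

lemma double_orth (ℓ m a : Fin 3 → ℂ) (h1 : lin ℓ a = 0) (h2 : lin m a = 0) :
    cr (cr ℓ m) a = 0 := by
  simp only [lin, Fin.sum_univ_three] at h1 h2
  have tri : ∀ i : Fin 3, i = 0 ∨ i = 1 ∨ i = 2 := by decide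
  funext i
  rcases tri i with rfl | rfl | rfl <;>
    simp only [cr, Matrix.cons_val_zero, Matrix.cons_val_one, Matrix.head_cons,
      Matrix.cons_val_two, Matrix.tail_cons, Pi.zero_apply] <;>
    first
      | linear_combination m 0 * h1 - ℓ 0 * h2
      | linear_combination m 1 * h1 - ℓ 1 * h2
      | linear_combination m 2 * h1 - ℓ 2 * h2
      | linear_combination ℓ 0 * h2 - m 0 * h1
      | linear_combination ℓ 1 * h2 - m 1 * h1
      | linear_combination ℓ 2 * h2 - m 2 * h1

lemma common_kernel (ℓ m a b : Fin 3 → ℂ) (hℓ : ℓ ≠ 0)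
    (hind : ∃ p, lin ℓ p = 0 ∧ lin m p ≠ 0)
    (ha : a ≠ 0) (hb : b ≠ 0)
    (hla : lin ℓ a = 0) (hma : lin m a = 0) (hlb : lin ℓ b = 0) (hmb : lin m b = 0) :
    ∃ t : ℂ, t ≠ 0 ∧ b = t • a := by
  have hn : cr ℓ m ≠ 0 := by
    intro h
    obtain ⟨p, hp, hmp⟩ := hind
    obtain ⟨t, rfl⟩ := cr_eq_zero_imp hℓ h
    apply hmp
    have : lin (t • ℓ) p = t * lin ℓ p := by
      simp [lin, Fin.sum_univ_three]; ring
    rw [this, hp, mul_zero]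
  obtain ⟨ta, hta⟩ := cr_eq_zero_imp hn (double_orth ℓ m a hla hma)
  obtain ⟨tb, htb⟩ := cr_eq_zero_imp hn (double_orth ℓ m b hlb hmb)
  have hta0 : ta ≠ 0 := by
    rintro rfl
    rw [zero_smul] at hta
    exact ha hta
  have htb0 : tb ≠ 0 := by
    rintro rfl
    rw [zero_smul] at htb
    exact hb htb
  refine ⟨tb / ta, div_ne_zero htb0 hta0, ?_⟩
  rw [hta, htb, smul_smul, div_mul_cancel₀ _ hta0]

end St14Aux

/-- Well-definedness of the Qtype: for a real bitangent `L = V(ℓ)` of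
the smooth quartic `V(f)` with tangency points `z₁, z₂` off the real line
`L∞ = V(ℓinf)`, and normalized representatives `z̃ᵢ` with `ℓ∞(z̃ᵢ) = 1`:
(1) for every real `v` with `ℓ(v) ≠ 0` the directional derivatives `(D_v f)(z̃ᵢ)` are
nonzero; (2) their product is (a) nonzero (and) real; (3) its sign is independent of
`v` and of the labeling of `z₁, z₂`: for two choices `v, v'` the products differ by the
positive factor `(ℓ(v')/ℓ(v))²`, and the product is symmetric in `z̃₁, z̃₂`. -/
theorem statement14 (f : MvPolynomial (Fin 3) ℝ) (hf : f.IsHomogeneous 4)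
    (hsm : SmoothQuartic f)
    (ℓ ℓinf : Fin 3 → ℝ) (hℓ : ℓ ≠ 0) (hinf : ℓinf ≠ 0)
    (z₁ z₂ : Fin 3 → ℂ) (hbt : IsBitangentAt f (cvec ℓ) z₁ z₂)
    (h1 : lin (cvec ℓinf) z₁ ≠ 0) (h2 : lin (cvec ℓinf) z₂ ≠ 0)
    (zt₁ zt₂ : Fin 3 → ℂ)
    (hzt₁ : zt₁ = (lin (cvec ℓinf) z₁)⁻¹ • z₁)
    (hzt₂ : zt₂ = (lin (cvec ℓinf) z₂)⁻¹ • z₂) :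
    ∀ v : Fin 3 → ℝ, lin ℓ v ≠ 0 →
      (Dv f v zt₁ ≠ 0 ∧ Dv f v zt₂ ≠ 0) ∧
      (∃ r : ℝ, r ≠ 0 ∧ Dv f v zt₁ * Dv f v zt₂ = (r : ℂ)) ∧
      (Dv f v zt₁ * Dv f v zt₂ = Dv f v zt₂ * Dv f v zt₁) ∧
      (∀ v' : Fin 3 → ℝ, lin ℓ v' ≠ 0 →
        Dv f v' zt₁ * Dv f v' zt₂ =
          (((lin ℓ v' / lin ℓ v : ℝ) : ℂ)) ^ 2 * (Dv f v zt₁ * Dv f v zt₂)) := by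
  classical
  obtain ⟨hℓc, hz1, hz2, hl1, hl2, m₁, m₂, c, hc, hm1, hm2, hind1, hind2, hline⟩ := hbt
  have hℓcne : cvec ℓ ≠ 0 := St14Aux.cvec_ne_zero hℓ
  have hzt1ne : zt₁ ≠ 0 := by
    rw [hzt₁]; exact smul_ne_zero (inv_ne_zero h1) hz1
  have hzt2ne : zt₂ ≠ 0 := by
    rw [hzt₂]; exact smul_ne_zero (inv_ne_zero h2) hz2
  have hlzt1 : lin (cvec ℓ) zt₁ = 0 := by
    rw [hzt₁, St14Aux.lin_smul, hl1, mul_zero]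
  have hlzt2 : lin (cvec ℓ) zt₂ = 0 := by
    rw [hzt₂, St14Aux.lin_smul, hl2, mul_zero]
  have hm1zt1 : lin m₁ zt₁ = 0 := by
    rw [hzt₁, St14Aux.lin_smul, hm1, mul_zero]
  have hm2zt2 : lin m₂ zt₂ = 0 := by
    rw [hzt₂, St14Aux.lin_smul, hm2, mul_zero]
  have hinf1 : lin (cvec ℓinf) zt₁ = 1 := by
    rw [hzt₁, St14Aux.lin_smul]; exact inv_mul_cancel₀ h1
  have hinf2 : lin (cvec ℓinf) zt₂ = 1 := by
    rw [hzt₂, St14Aux.lin_smul]; exact inv_mul_cancel₀ h2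
  have hline' : ∀ p, lin (cvec ℓ) p = 0 → cev f p = c * (lin m₂ p * lin m₁ p) ^ 2 := by
    intro p hp; rw [hline p hp]; ring
  obtain ⟨lam₁, hlam₁, hg1⟩ :=
    St14Aux.grad_eq f hsm ℓ hℓ m₁ m₂ c hc hline zt₁ hzt1ne hlzt1 hm1zt1
  obtain ⟨lam₂, hlam₂, hg2⟩ :=
    St14Aux.grad_eq f hsm ℓ hℓ m₂ m₁ c hc hline' zt₂ hzt2ne hlzt2 hm2zt2
  have hDv : ∀ (w : Fin 3 → ℝ) (zt : Fin 3 → ℂ) (lam : ℂ),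
      (∀ i, eval zt (pderiv i (cmap f)) = lam * (ℓ i : ℂ)) →
      Dv f w zt = lam * ((lin ℓ w : ℝ) : ℂ) := by
    intro w zt lam hg
    unfold Dv
    simp only [hg]
    simp only [lin, Fin.sum_univ_three]
    push_cast
    ring
  have main : ∀ (za zb ma mb : Fin 3 → ℂ),
      za ≠ 0 → zb ≠ 0 →
      lin (cvec ℓ) za = 0 → lin (cvec ℓ) zb = 0 →
      lin ma za = 0 → lin mb zb = 0 →
      (∃ p, lin (cvec ℓ) p = 0 ∧ lin ma p ≠ 0) →
      (∃ p, lin (cvec ℓ) p = 0 ∧ lin mb p ≠ 0) →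
      (∀ p, lin (cvec ℓ) p = 0 → cev f p = c * (lin ma p * lin mb p) ^ 2) →
      lin (cvec ℓinf) za = 1 → lin (cvec ℓinf) zb = 1 →
      St14Aux.conjv za = za ∨ St14Aux.conjv za = zb := by
    intro za zb ma mb hza hzb hla hlb hma hmb hia hib hl hna hnb
    have hca : lin (cvec ℓ) (St14Aux.conjv za) = 0 := by
      rw [St14Aux.lin_cvec_conjv, hla, map_zero]
    have hfa : cev f za = 0 := by rw [hl za hla, hma]; ring
    have hfc : cev f (St14Aux.conjv za) = 0 := by
      rw [St14Aux.cev_conj, hfa, map_zero]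
    have hthis := hl _ hca
    rw [hfc] at hthis
    have hsq : (lin ma (St14Aux.conjv za) * lin mb (St14Aux.conjv za)) ^ 2 = 0 :=
      (or_iff_right hc).mp (mul_eq_zero.mp hthis.symm)
    have hprod : lin ma (St14Aux.conjv za) * lin mb (St14Aux.conjv za) = 0 :=
      pow_eq_zero_iff two_ne_zero |>.mp hsq
    have hcne : St14Aux.conjv za ≠ 0 := St14Aux.conjv_ne_zero hza
    have hinfc : lin (cvec ℓinf) (St14Aux.conjv za) = 1 := by
      rw [St14Aux.lin_cvec_conjv, hna, map_one]
    have hnorm : ∀ x, lin (cvec ℓinf) x = 1 →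
        (∃ t : ℂ, t ≠ 0 ∧ St14Aux.conjv za = t • x) → St14Aux.conjv za = x := by
      rintro x hx ⟨t, ht0, heq⟩
      have hi := hinfc
      rw [heq, St14Aux.lin_smul, hx, mul_one] at hi
      rw [heq, hi, one_smul]
    rcases mul_eq_zero.mp hprod with hA | hB
    · exact Or.inl (hnorm za hna
        (St14Aux.common_kernel (cvec ℓ) ma za _ hℓcne hia hza hcne hla hma hca hA))
    · exact Or.inr (hnorm zb hnb
        (St14Aux.common_kernel (cvec ℓ) mb zb _ hℓcne hib hzb hcne hlb hmb hca hB))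
  have hcase1 := main zt₁ zt₂ m₁ m₂ hzt1ne hzt2ne hlzt1 hlzt2 hm1zt1 hm2zt2
    hind1 hind2 hline hinf1 hinf2
  have hcase2 := main zt₂ zt₁ m₂ m₁ hzt2ne hzt1ne hlzt2 hlzt1 hm2zt2 hm1zt1
    hind2 hind1 hline' hinf2 hinf1
  intro v hv
  have hvC : ((lin ℓ v : ℝ) : ℂ) ≠ 0 := Complex.ofReal_ne_zero.mpr hv
  have hd1 : Dv f v zt₁ = lam₁ * ((lin ℓ v : ℝ) : ℂ) := hDv v zt₁ lam₁ hg1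
  have hd2 : Dv f v zt₂ = lam₂ * ((lin ℓ v : ℝ) : ℂ) := hDv v zt₂ lam₂ hg2
  have hne1 : Dv f v zt₁ ≠ 0 := by rw [hd1]; exact mul_ne_zero hlam₁ hvC
  have hne2 : Dv f v zt₂ ≠ 0 := by rw [hd2]; exact mul_ne_zero hlam₂ hvC
  refine ⟨⟨hne1, hne2⟩, ?_, mul_comm _ _, ?_⟩
  · have hPconj : (starRingEnd ℂ) (Dv f v zt₁ * Dv f v zt₂) =
        Dv f v zt₁ * Dv f v zt₂ := by
      rw [map_mul, ← St14Aux.Dv_conj, ← St14Aux.Dv_conj]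
      rcases hcase1 with e1 | e1
      · rcases hcase2 with e2 | e2
        · rw [e1, e2]
        · rw [e1, e2, show zt₂ = zt₁ from by rw [← St14Aux.conjv_conjv zt₂, e2, e1]]
      · rcases hcase2 with e2 | e2
        · rw [e1, e2, show zt₁ = zt₂ from by rw [← St14Aux.conjv_conjv zt₁, e1, e2]]
        · rw [e1, e2]; exact mul_comm _ _
    obtain ⟨r, hr⟩ := Complex.conj_eq_iff_real.mp hPconj
    refine ⟨r, ?_, hr⟩
    rintro rfl
    exact mul_ne_zero hne1 hne2 (by simpa using hr)
  · intro v' hv'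
    have hd1' : Dv f v' zt₁ = lam₁ * ((lin ℓ v' : ℝ) : ℂ) := hDv v' zt₁ lam₁ hg1
    have hd2' : Dv f v' zt₂ = lam₂ * ((lin ℓ v' : ℝ) : ℂ) := hDv v' zt₂ lam₂ hg2
    have hdiv : ((lin ℓ v' / lin ℓ v : ℝ) : ℂ)
        = ((lin ℓ v' : ℝ) : ℂ) / ((lin ℓ v : ℝ) : ℂ) := by push_cast; ring
    rw [hd1, hd2, hd1', hd2', hdiv]
    field_simp

end
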